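/- Let n ≥ 1, p ≥ 0, and k ≥ max(3n−2−p, n) be integers, set L = k + p − n + 1, and assume L is odd; set r = (L+1)/2. For y ∈ ℝ^k define the r × n matrix M(y) by M(y)_{i,j} = (y_{i+j−1} if 1 ≤ i+j−1 ≤ k, else 0) + (y_{L−i+j} if 1 ≤ L−i+j ≤ k, else 0), for 1 ≤ i ≤ r, 1 ≤ j ≤ n. Then there exists y ∈ ℝ^k such that M(y) has full column rank n. -/
import Mathlib


/-- The folded coefficient matrix `M(y) = H₁ + Î H₂ ∈ ℝ^{r×n}` of the linear
autocorrelation equations: in 1-based indexing,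
`M(y)_{i,j} = (y_{i+j-1} if 1 ≤ i+j-1 ≤ k else 0) + (y_{L-i+j} if 1 ≤ L-i+j ≤ k else 0)`.
Here indices are 0-based, so `y` is indexed `0, …, k-1`, rows by `i < r`, columns by `j < n`. -/
noncomputable def Mmat (k n L r : ℕ) (y : ℕ → ℝ) : Matrix (Fin r) (Fin n) ℝ :=
  Matrix.of fun i j =>
    (if i.1 + j.1 + 1 ≤ k then y (i.1 + j.1) else 0) +
    (if i.1 < L + j.1 ∧ L + j.1 ≤ k + i.1 then y (L + j.1 - i.1 - 1) else 0)

/-- For `n ≥ 1`, `p ≥ 0`, `k ≥ max(3n-2-p, n)`, `L = k+p-n+1` odd and `r = (L+1)/2`,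
there exists a background `y ∈ ℝᵏ` for which `M(y)` has full column rank `n`. -/
theorem stmt7 (n p k : ℕ) (hn : 1 ≤ n) (hk1 : 3 * n - 2 - p ≤ k) (hk2 : n ≤ k)
    (hodd : Odd (k + p - n + 1)) :
    ∃ y : ℕ → ℝ,
      (Mmat k n (k + p - n + 1) ((k + p - n + 1 + 1) / 2) y).rank = n := by
  set L := k + p - n + 1 with hLdef
  set r := (L + 1) / 2 with hrdef
  have hL : 2 * n - 1 ≤ L := by omega
  have hr : n ≤ r := by omega
  set y : ℕ → ℝ := fun m => if m = n - 1 then 1 else 0 with hy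
  refine ⟨y, ?_⟩
  set M : Matrix (Fin r) (Fin n) ℝ := Mmat k n L r y with hM
  have hfr : ∀ j : Fin n, n - 1 - (j : ℕ) < r := fun j => by omega
  set f : Fin n → Fin r := fun j => ⟨n - 1 - (j : ℕ), hfr j⟩ with hf
  -- off-diagonal entries of the selected square submatrix vanish
  have hoff : ∀ j c : Fin n, c ≠ j → M (f j) c = 0 := by
    intro j c hcj
    have hj := j.isLt
    have hc := c.isLt
    have hne : (c : ℕ) ≠ (j : ℕ) := fun h => hcj (Fin.ext h)
    simp only [hM, Mmat, Matrix.of_apply, hy, hf]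
    split_ifs <;> norm_num <;> omega
  -- diagonal entries are positive
  have hdiag : ∀ j : Fin n, 0 < M (f j) j := by
    intro j
    have hj := j.isLt
    simp only [hM, Mmat, Matrix.of_apply, hy, hf]
    have h1 : n - 1 - (j : ℕ) + (j : ℕ) + 1 ≤ k := by omega
    have h2 : n - 1 - (j : ℕ) + (j : ℕ) = n - 1 := by omega
    rw [if_pos h1, if_pos h2]
    split_ifs <;> norm_num <;> omega
  have hker : ∀ v : Fin n → ℝ, M.mulVec v = 0 → v = 0 := by
    intro v hv
    funext j
    have h0 : M.mulVec v (f j) = 0 := congrFun hv (f j)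
    rw [Matrix.mulVec, dotProduct] at h0
    rw [Finset.sum_eq_single j] at h0
    · rcases mul_eq_zero.mp h0 with h | h
      · exact absurd h (ne_of_gt (hdiag j))
      · simpa using h
    · intro b _ hb
      rw [hoff j b hb, zero_mul]
    · intro h
      exact absurd (Finset.mem_univ j) h
  have hinj : Function.Injective M.mulVecLin := by
    rw [← LinearMap.ker_eq_bot, LinearMap.ker_eq_bot']
    intro v hv
    exact hker v (by simpa using hv)
  rw [Matrix.rank, LinearMap.finrank_range_of_inj hinj]
  simp
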